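/- Let X, Y be normed spaces, T : X × Y → X continuous such that for every y ∈ Y there is a unique fixed point x(y) satisfying x(y) = T(x(y), y), the map y ↦ x(y) is continuous with x(0) = 0, and ‖T(x,y)‖ ≤ C(‖x‖^k + ‖y‖^k) for some k ≥ 2 and constant C. Then for all y of sufficiently small norm, ‖x(y)‖ ≤ 2C‖y‖^k. -/

import Mathlib

/-- Bounds on implicit functions: if `T : X × Y → X` is continuous, `x(y)` is the unique
fixed point of `T(·, y)`, the fixed-point map is continuous with `x(0) = 0`, and
`‖T(x,y)‖ ≤ C(‖x‖^k + ‖y‖^k)`, then `‖x(y)‖ ≤ 2C‖y‖^k` for all `y` of small norm. -/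
theorem stmt_4 {X Y : Type*} [NormedAddCommGroup X] [NormedSpace ℝ X]
    [NormedAddCommGroup Y] [NormedSpace ℝ Y]
    (T : X × Y → X) (hT : Continuous T)
    (x : Y → X) (hfix : ∀ y, x y = T (x y, y))
    (huniq : ∀ y z, z = T (z, y) → z = x y)
    (hxcont : Continuous x) (hx0 : x 0 = 0)
    (k : ℕ) (hk : 2 ≤ k) (C : ℝ) (hC : 0 < C)
    (hbound : ∀ p : X × Y, ‖T p‖ ≤ C * (‖p.1‖ ^ k + ‖p.2‖ ^ k)) :
    ∃ δ > 0, ∀ y : Y, ‖y‖ ≤ δ → ‖x y‖ ≤ 2 * C * ‖y‖ ^ k := by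
  set ε : ℝ := min 1 (1 / (2 * C)) with hε
  have hεpos : 0 < ε := lt_min one_pos (by positivity)
  have hCε : C * ε ^ (k - 1) ≤ 1 / 2 := by
    have h1 : ε ^ (k - 1) ≤ ε := by
      calc ε ^ (k - 1) ≤ ε ^ 1 :=
            pow_le_pow_of_le_one hεpos.le (min_le_left _ _) (by omega)
        _ = ε := pow_one ε
    calc C * ε ^ (k - 1) ≤ C * ε := by nlinarith
      _ ≤ C * (1 / (2 * C)) := by nlinarith [min_le_right 1 (1 / (2 * C))]
      _ = 1 / 2 := by field_simp
  have hcont : ContinuousAt x 0 := hxcont.continuousAt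
  rw [Metric.continuousAt_iff] at hcont
  obtain ⟨δ, hδpos, hδ⟩ := hcont ε hεpos
  refine ⟨δ / 2, by positivity, fun y hy => ?_⟩
  have hdist : dist y 0 < δ := by
    rw [dist_zero_right]; linarith
  have hxy : ‖x y‖ ≤ ε := by
    have := hδ hdist
    rw [hx0, dist_zero_right] at this
    exact this.le
  have hb := hbound (x y, y)
  rw [← hfix y] at hb
  have hsplit : C * ‖x y‖ ^ k ≤ (1 / 2) * ‖x y‖ := by
    have hxk : ‖x y‖ ^ k = ‖x y‖ ^ (k - 1) * ‖x y‖ := by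
      rw [← pow_succ]; congr 1; omega
    rw [hxk]
    have h1 : ‖x y‖ ^ (k - 1) ≤ ε ^ (k - 1) :=
      pow_le_pow_left₀ (norm_nonneg _) hxy _
    have h2 : C * ‖x y‖ ^ (k - 1) ≤ 1 / 2 :=
      le_trans (mul_le_mul_of_nonneg_left h1 hC.le) hCε
    calc C * (‖x y‖ ^ (k - 1) * ‖x y‖) = C * ‖x y‖ ^ (k - 1) * ‖x y‖ := by ring
      _ ≤ (1 / 2) * ‖x y‖ := mul_le_mul_of_nonneg_right h2 (norm_nonneg _)
  have : ‖x y‖ ≤ C * ‖x y‖ ^ k + C * ‖y‖ ^ k := by linarith [hb]; 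
  linarith
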